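/- (Deterministic ellipsoid collision check.) Let B and C be n×n real symmetric positive definite matrices and let b, c ∈ ℝⁿ with (b − c)ᵀ C (b − c) > 1 (b lies strictly outside E₂). Consider the solid ellipsoids E₁ = {x : (x − b)ᵀ B (x − b) ≤ 1} and E₂ = {x : (x − c)ᵀ C (x − c) ≤ 1}. Set C̃ = B^{1/2} C^{-1} B^{1/2}, let c̃ be the unique solution of (B^{-1/2}(B^{-1/2} C B^{-1/2})^{1/2}) c̃ = c − b, let M₁ be the 2n×2n block matrix [C̃, −I_n; −c̃c̃ᵀ, C̃], and suppose λ ∈ ℝ is a real eigenvalue of M₁ whose real part is minimal among the real parts of all complex eigenvalues of M₁, with λ < 0. Set A = (λI_n − C̃)² and y = c − b. Then E₁ ∩ E₂ ≠ ∅ if and only if yᵀ B^{1/2} A^{-1} B^{1/2} y ≤ 1/λ². -/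

import Mathlib

open Matrix

open scoped ComplexOrder in
/-- The square root of a positive semidefinite matrix, as `Matrix.PosSemidef.sqrt` was defined
in Mathlib of December 2024 (since removed from Mathlib). -/
noncomputable def Matrix.PosSemidef.sqrt {n 𝕜 : Type*} [Fintype n] [RCLike 𝕜] [DecidableEq n]
    {A : Matrix n n 𝕜} (hA : A.PosSemidef) : Matrix n n 𝕜 :=
  hA.1.eigenvectorUnitary.1 * diagonal ((↑) ∘ (√·) ∘ hA.1.eigenvalues) *
    (star hA.1.eigenvectorUnitary : Matrix n n 𝕜)

open scoped ComplexOrder in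
theorem Matrix.PosSemidef.sqrt_mul_self {n 𝕜 : Type*} [Fintype n] [RCLike 𝕜] [DecidableEq n]
    {A : Matrix n n 𝕜} (hA : A.PosSemidef) : hA.sqrt * hA.sqrt = A := by
  conv_rhs => rw [hA.1.spectral_theorem, Unitary.conjStarAlgAut_apply]
  unfold Matrix.PosSemidef.sqrt
  have hU : (star hA.1.eigenvectorUnitary : Matrix n n 𝕜) * hA.1.eigenvectorUnitary.1 = 1 :=
    Unitary.coe_star_mul_self _
  calc _ = hA.1.eigenvectorUnitary.1 * (diagonal ((↑) ∘ (√·) ∘ hA.1.eigenvalues) *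
        ((star hA.1.eigenvectorUnitary : Matrix n n 𝕜) * hA.1.eigenvectorUnitary.1) *
        diagonal ((↑) ∘ (√·) ∘ hA.1.eigenvalues)) * (star hA.1.eigenvectorUnitary : Matrix n n 𝕜) := by
        simp only [Matrix.mul_assoc]
    _ = _ := by
      rw [hU, Matrix.mul_one, diagonal_mul_diagonal]
      congr 3
      funext i
      simp only [Function.comp_apply, ← RCLike.ofReal_mul, Real.mul_self_sqrt (hA.eigenvalues_nonneg i)]

open scoped ComplexOrder in
theorem Matrix.PosSemidef.posSemidef_sqrt {n 𝕜 : Type*} [Fintype n] [RCLike 𝕜] [DecidableEq n]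
    {A : Matrix n n 𝕜} (hA : A.PosSemidef) : hA.sqrt.PosSemidef := by
  unfold Matrix.PosSemidef.sqrt
  rw [(Unitary.isUnit_coe).posSemidef_star_right_conjugate_iff, posSemidef_diagonal_iff]
  intro i
  simp only [Function.comp_apply, RCLike.ofReal_nonneg]
  exact Real.sqrt_nonneg _

private lemma dot_eq {n : ℕ} {M P : Matrix (Fin n) (Fin n) ℝ} (h : Pᵀ * P = M)
    (x y : Fin n → ℝ) : x ⬝ᵥ (M *ᵥ y) = (P *ᵥ x) ⬝ᵥ (P *ᵥ y) := by
  subst h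
  rw [← Matrix.mulVec_mulVec, Matrix.dotProduct_mulVec, Matrix.vecMul_transpose]

private lemma dot_sym {n : ℕ} {P : Matrix (Fin n) (Fin n) ℝ} (h : Pᵀ = P)
    (x y : Fin n → ℝ) : (P *ᵥ x) ⬝ᵥ y = x ⬝ᵥ (P *ᵥ y) := by
  rw [Matrix.dotProduct_mulVec, ← Matrix.vecMul_transpose, h]

private lemma dot_cs {n : ℕ} (x y : Fin n → ℝ) :
    (x ⬝ᵥ y) ^ 2 ≤ (x ⬝ᵥ x) * (y ⬝ᵥ y) := by
  simpa [dotProduct, pow_two] using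
    Finset.sum_mul_sq_le_sq_mul_sq Finset.univ x y

private lemma dot_self_nonneg {n : ℕ} (x : Fin n → ℝ) : 0 ≤ x ⬝ᵥ x :=
  Finset.sum_nonneg fun _ _ => mul_self_nonneg _

private lemma comm_inv {n : ℕ} {P H : Matrix (Fin n) (Fin n) ℝ}
    (h : P * H = H * P) (hdet : IsUnit H.det) : P * H⁻¹ = H⁻¹ * P := by
  have h1 : H * H⁻¹ = 1 := Matrix.mul_nonsing_inv _ hdet
  have h2 : H⁻¹ * H = 1 := Matrix.nonsing_inv_mul _ hdet
  calc P * H⁻¹ = H⁻¹ * H * (P * H⁻¹) := by rw [h2, Matrix.one_mul]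
    _ = H⁻¹ * (H * P) * H⁻¹ := by simp only [Matrix.mul_assoc]
    _ = H⁻¹ * (P * H) * H⁻¹ := by rw [h]
    _ = H⁻¹ * P * (H * H⁻¹) := by simp only [Matrix.mul_assoc]
    _ = H⁻¹ * P := by rw [h1, Matrix.mul_one]

set_option maxHeartbeats 1000000 in
/-- Deterministic ellipsoid collision check. With `B, C` SPD, `b` strictly outside `E₂`
(`(b-c)ᵀC(b-c) > 1`), `C̃ = B^{1/2} C⁻¹ B^{1/2}`, `c̃` the solution of
`(B^{-1/2}(B^{-1/2}CB^{-1/2})^{1/2}) c̃ = c - b`, `M₁ = [C̃, -I; -c̃c̃ᵀ, C̃]`, `l` a real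
eigenvalue of `M₁` of minimal real part with `l < 0`, `A = (l•I - C̃)²` and `y = c - b`:
`E₁ ∩ E₂ ≠ ∅ ↔ yᵀ B^{1/2} A⁻¹ B^{1/2} y ≤ 1/l²`. -/
theorem stmt_10 {n : ℕ} {B C : Matrix (Fin n) (Fin n) ℝ}
    (hB : B.PosDef) (hC : C.PosDef) {b c : Fin n → ℝ}
    (houtside : (b - c) ⬝ᵥ (C *ᵥ (b - c)) > 1)
    (E₁ E₂ : Set (Fin n → ℝ))
    (hE₁ : E₁ = {x | (x - b) ⬝ᵥ (B *ᵥ (x - b)) ≤ 1})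
    (hE₂ : E₂ = {x | (x - c) ⬝ᵥ (C *ᵥ (x - c)) ≤ 1})
    (Q : Matrix (Fin n) (Fin n) ℝ) (hQspd : Q.PosDef)
    (hQsq : Q ^ 2 = (hB.posSemidef.sqrt)⁻¹ * C * (hB.posSemidef.sqrt)⁻¹)
    (Ct : Matrix (Fin n) (Fin n) ℝ)
    (hCt : Ct = hB.posSemidef.sqrt * C⁻¹ * hB.posSemidef.sqrt)
    (ct : Fin n → ℝ)
    (hct : ((hB.posSemidef.sqrt)⁻¹ * Q) *ᵥ ct = c - b)
    (M₁ : Matrix (Fin n ⊕ Fin n) (Fin n ⊕ Fin n) ℝ)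
    (hM₁ : M₁ = Matrix.fromBlocks Ct (-1) (-(Matrix.vecMulVec ct ct)) Ct)
    {l : ℝ}
    (hlmem : (l : ℂ) ∈ spectrum ℂ (M₁.map Complex.ofReal))
    (hlmin : ∀ z ∈ spectrum ℂ (M₁.map Complex.ofReal), l ≤ z.re)
    (hlneg : l < 0)
    (A : Matrix (Fin n) (Fin n) ℝ)
    (hA : A = (l • (1 : Matrix (Fin n) (Fin n) ℝ) - Ct) ^ 2)
    (y : Fin n → ℝ) (hy : y = c - b) :
    (E₁ ∩ E₂).Nonempty ↔
      y ⬝ᵥ ((hB.posSemidef.sqrt * A⁻¹ * hB.posSemidef.sqrt) *ᵥ y) ≤ 1 / l ^ 2 := by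
  classical
  set S : Matrix (Fin n) (Fin n) ℝ := hB.posSemidef.sqrt with hSdef
  -- basic facts about S
  have hSS : S * S = B := hB.posSemidef.sqrt_mul_self
  have hSsym : Sᵀ = S := by
    have h := hB.posSemidef.posSemidef_sqrt.isHermitian
    rwa [Matrix.IsHermitian, Matrix.conjTranspose_eq_transpose_of_trivial] at h
  have hSdet : IsUnit S.det := by
    have h2 : S.det * S.det = B.det := by rw [← Matrix.det_mul, hSS]
    refine isUnit_iff_ne_zero.mpr fun h0 => ?_
    rw [h0, mul_zero] at h2
    exact hB.det_pos.ne' h2.symm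
  have hS1 : S * S⁻¹ = 1 := Matrix.mul_nonsing_inv _ hSdet
  have hS2 : S⁻¹ * S = 1 := Matrix.nonsing_inv_mul _ hSdet
  -- basic facts about C
  have hCdet : IsUnit C.det := isUnit_iff_ne_zero.mpr hC.det_pos.ne'
  -- basic facts about Q
  have hQsym : Qᵀ = Q := by
    have h := hQspd.isHermitian
    rwa [Matrix.IsHermitian, Matrix.conjTranspose_eq_transpose_of_trivial] at h
  have hstar : ∀ x : Fin n → ℝ, star x = x := fun x => funext fun i => rfl
  have hQ2sym : (Q ^ 2)ᵀ = Q ^ 2 := by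
    rw [pow_two, Matrix.transpose_mul, hQsym, ← pow_two]
  have hQ2pd : (Q ^ 2).PosDef := by
    rw [Matrix.posDef_iff_dotProduct_mulVec]
    constructor
    · rw [Matrix.IsHermitian, Matrix.conjTranspose_eq_transpose_of_trivial]
      exact hQ2sym
    · intro x hx
      rw [hstar, dot_eq (by rw [hQsym, ← pow_two]) x x]
      have hQx : Q *ᵥ x ≠ 0 := by
        intro h0
        have h1 := hQspd.dotProduct_mulVec_pos hx
        rw [hstar, h0] at h1
        simp at h1
      rcases lt_or_eq_of_le (dot_self_nonneg (Q *ᵥ x)) with h | h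
      · exact h
      · exact absurd (dotProduct_self_eq_zero.mp h.symm) hQx
  -- the matrix H = 1 - l • Q² and μ = -l
  set μ : ℝ := -l with hμdef
  have hμpos : 0 < μ := by rw [hμdef]; linarith
  set H : Matrix (Fin n) (Fin n) ℝ := 1 - l • Q ^ 2 with hHdef
  have hHalt : H = 1 + μ • Q ^ 2 := by rw [hHdef, hμdef, sub_eq_add_neg, neg_smul]
  have hHpd : H.PosDef := by
    rw [hHalt]
    refine Matrix.PosDef.add Matrix.PosDef.one ?_
    rw [Matrix.posDef_iff_dotProduct_mulVec]
    constructor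
    · rw [Matrix.IsHermitian, Matrix.conjTranspose_eq_transpose_of_trivial,
        Matrix.transpose_smul, hQ2sym]
    · intro x hx
      rw [hstar, Matrix.smul_mulVec, dotProduct_smul]
      have := hQ2pd.dotProduct_mulVec_pos hx
      rw [hstar] at this
      exact smul_pos hμpos this
  have hHsym : Hᵀ = H := by
    rw [hHdef, Matrix.transpose_sub, Matrix.transpose_one, Matrix.transpose_smul, hQ2sym]
  have hHdet : IsUnit H.det := isUnit_iff_ne_zero.mpr hHpd.det_pos.ne'
  have hH1 : H * H⁻¹ = 1 := Matrix.mul_nonsing_inv _ hHdet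
  have hHinvsym : (H⁻¹)ᵀ = H⁻¹ := by rw [Matrix.transpose_nonsing_inv, hHsym]
  -- commutation facts
  have hQH : Q * H = H * Q := by
    rw [hHdef, Matrix.mul_sub, Matrix.sub_mul, Matrix.mul_one, Matrix.one_mul,
      mul_smul_comm, smul_mul_assoc, ← pow_succ, ← pow_succ']
  have hQ2H : Q ^ 2 * H = H * Q ^ 2 := by
    rw [hHdef, Matrix.mul_sub, Matrix.sub_mul, Matrix.mul_one, Matrix.one_mul,
      mul_smul_comm, smul_mul_assoc]
  have hQHinv : Q * H⁻¹ = H⁻¹ * Q := comm_inv hQH hHdet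
  have hQ2Hinv : Q ^ 2 * H⁻¹ = H⁻¹ * Q ^ 2 := comm_inv hQ2H hHdet
  have hKsym : (Q ^ 2 * H⁻¹)ᵀ = Q ^ 2 * H⁻¹ := by
    rw [Matrix.transpose_mul, hHinvsym, hQ2sym, ← hQ2Hinv]
  -- Ct is the inverse of Q²
  have hCtQ2 : Ct * Q ^ 2 = 1 := by
    rw [hCt, hQsq]
    simp only [Matrix.mul_assoc]
    rw [Matrix.mul_nonsing_inv_cancel_left _ _ hSdet,
      Matrix.nonsing_inv_mul_cancel_left _ _ hCdet, hS1]
  -- N = l•1 - Ct and its inverse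
  set N : Matrix (Fin n) (Fin n) ℝ := l • 1 - Ct with hNdef
  have hNQ2 : N * Q ^ 2 = -H := by
    rw [hNdef, Matrix.sub_mul, hCtQ2, smul_mul_assoc, Matrix.one_mul, hHdef, neg_sub]
  have hNK : N * (-(Q ^ 2 * H⁻¹)) = 1 := by
    rw [Matrix.mul_neg, ← Matrix.mul_assoc, hNQ2, Matrix.neg_mul, neg_neg, hH1]
  have hNdet : IsUnit N.det := Matrix.isUnit_det_of_right_inverse hNK
  have hNinv : N⁻¹ = -(Q ^ 2 * H⁻¹) := Matrix.inv_eq_right_inv hNK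
  have hNK' : N * (Q ^ 2 * H⁻¹) = -1 := by
    have h := hNK
    rw [Matrix.mul_neg, neg_eq_iff_eq_neg] at h
    rw [h]
  -- A = N² and A⁻¹ = K²
  have hAN : A = N * N := by rw [hA, pow_two]
  have hAK : A * (Q ^ 2 * H⁻¹ * (Q ^ 2 * H⁻¹)) = 1 := by
    calc A * (Q ^ 2 * H⁻¹ * (Q ^ 2 * H⁻¹))
        = N * (N * (Q ^ 2 * H⁻¹) * (Q ^ 2 * H⁻¹)) := by
          rw [hAN]; simp only [Matrix.mul_assoc]
      _ = N * (-(Q ^ 2 * H⁻¹)) := by rw [hNK', neg_one_mul]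
      _ = 1 := hNK
  have hAinvK : A⁻¹ = Q ^ 2 * H⁻¹ * (Q ^ 2 * H⁻¹) := Matrix.inv_eq_right_inv hAK
  have hAdet : IsUnit A.det := Matrix.isUnit_det_of_right_inverse hAK
  -- spectral step : determinant vanishes over the reals
  have hdet0 : (l • (1 : Matrix (Fin n ⊕ Fin n) (Fin n ⊕ Fin n) ℝ) - M₁).det = 0 := by
    rw [spectrum.mem_iff, Matrix.isUnit_iff_isUnit_det, isUnit_iff_ne_zero, not_not] at hlmem
    have hmap : algebraMap ℂ (Matrix (Fin n ⊕ Fin n) (Fin n ⊕ Fin n) ℂ) ((l : ℂ))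
        - M₁.map Complex.ofReal
        = (l • (1 : Matrix (Fin n ⊕ Fin n) (Fin n ⊕ Fin n) ℝ) - M₁).map Complex.ofReal := by
      rw [Algebra.algebraMap_eq_smul_one]
      ext i j
      simp only [Matrix.sub_apply, Matrix.map_apply, Matrix.smul_apply, Matrix.one_apply,
        smul_eq_mul, mul_ite, mul_one, mul_zero, Complex.ofReal_sub]
      split <;> simp
    rw [hmap] at hlmem
    have h2 : ((l • (1 : Matrix (Fin n ⊕ Fin n) (Fin n ⊕ Fin n) ℝ) - M₁).map Complex.ofReal).det
        = (((l • (1 : Matrix (Fin n ⊕ Fin n) (Fin n ⊕ Fin n) ℝ) - M₁).det : ℝ) : ℂ) :=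
      (RingHom.map_det Complex.ofRealHom _).symm
    rw [h2] at hlmem
    exact_mod_cast hlmem
  have hblocks : l • (1 : Matrix (Fin n ⊕ Fin n) (Fin n ⊕ Fin n) ℝ) - M₁
      = Matrix.fromBlocks N 1 (Matrix.vecMulVec ct ct) N := by
    rw [hM₁]
    ext i j
    cases i <;> cases j <;>
      simp [hNdef, Matrix.sub_apply, Matrix.smul_apply, Matrix.one_apply, Matrix.fromBlocks,
        Matrix.of_apply, Sum.elim_inl, Sum.elim_inr]
  haveI : Invertible N := N.invertibleOfIsUnitDet hNdet
  have hdetblocks := Matrix.det_fromBlocks₁₁ N 1 (Matrix.vecMulVec ct ct) N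
  rw [Matrix.invOf_eq_nonsing_inv] at hdetblocks
  rw [hblocks, hdetblocks] at hdet0
  have hdet3 : (N - Matrix.vecMulVec ct ct * N⁻¹).det = 0 := by
    rcases mul_eq_zero.mp hdet0 with h | h
    · exact absurd h hNdet.ne_zero
    · rwa [Matrix.mul_one] at h
  have hdet4 : (A - Matrix.vecMulVec ct ct).det = 0 := by
    have hmul : (N - Matrix.vecMulVec ct ct * N⁻¹) * N = A - Matrix.vecMulVec ct ct := by
      rw [Matrix.sub_mul, Matrix.mul_assoc, Matrix.nonsing_inv_mul _ hNdet, Matrix.mul_one, ← hAN]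
    rw [← hmul, Matrix.det_mul, hdet3, zero_mul]
  have hctA : ct ⬝ᵥ (A⁻¹ *ᵥ ct) = 1 := by
    have hcolneg : Matrix.replicateCol Unit (-ct) = -Matrix.replicateCol Unit ct := by
      ext i j; simp [Matrix.replicateCol]
    have hsplit : A + Matrix.replicateCol Unit (-ct) * Matrix.replicateRow Unit ct
        = A - Matrix.vecMulVec ct ct := by
      rw [hcolneg, Matrix.neg_mul, ← Matrix.vecMulVec_eq Unit, sub_eq_add_neg]
    have hdl := Matrix.det_add_replicateCol_mul_replicateRow (ι := Unit) hAdet (-ct) ct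
    rw [hsplit, hdet4] at hdl
    have h5 : (1 + Matrix.replicateRow Unit ct * A⁻¹ * Matrix.replicateCol Unit (-ct)).det = 0 := by
      rcases mul_eq_zero.mp hdl.symm with h | h
      · exact absurd h hAdet.ne_zero
      · exact h
    rw [Matrix.det_unique, Matrix.add_apply, Matrix.one_apply_eq, Matrix.mul_assoc,
      ← Matrix.replicateCol_mulVec, Matrix.replicateRow_mul_replicateCol_apply, Matrix.mulVec_neg,
      dotProduct_neg] at h5
    linarith
  -- the vectors w and v
  set w : Fin n → ℝ := S *ᵥ y with hwdef
  have hwct : w = Q *ᵥ ct := by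
    rw [hwdef, hy, ← hct, Matrix.mulVec_mulVec, ← Matrix.mul_assoc, hS1, Matrix.one_mul]
  set v : Fin n → ℝ := (Q * H⁻¹) *ᵥ w with hvdef
  have hmx1 : Q * H⁻¹ * Q = Q ^ 2 * H⁻¹ := by
    rw [Matrix.mul_assoc, ← hQHinv, ← Matrix.mul_assoc, ← pow_two]
  have hvK : v = (Q ^ 2 * H⁻¹) *ᵥ ct := by
    rw [hvdef, hwct, Matrix.mulVec_mulVec, hmx1]
  have hKtKA : (Q ^ 2 * H⁻¹)ᵀ * (Q ^ 2 * H⁻¹) = A⁻¹ := by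
    rw [hKsym, ← hAinvK]
  have hvv : v ⬝ᵥ v = 1 := by
    rw [hvK, ← dot_eq hKtKA ct ct, hctA]
  have hQv : Q *ᵥ v = (Q ^ 2 * H⁻¹) *ᵥ w := by
    rw [hvdef, Matrix.mulVec_mulVec, ← Matrix.mul_assoc, ← pow_two]
  have hmx2 : H * (Q * H⁻¹) = Q := by
    rw [← Matrix.mul_assoc, ← hQH, Matrix.mul_assoc, hH1, Matrix.mul_one]
  have hQw : Q *ᵥ w = H *ᵥ v := by
    rw [hvdef, Matrix.mulVec_mulVec w H (Q * H⁻¹), hmx2]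
  -- reduction of the target inequality
  have hlne : l ≠ 0 := ne_of_lt hlneg
  have hl2 : (0:ℝ) < l ^ 2 := by positivity
  have hl2μ : l ^ 2 = μ ^ 2 := by rw [hμdef]; ring
  have htarget : y ⬝ᵥ ((S * A⁻¹ * S) *ᵥ y) = (Q *ᵥ v) ⬝ᵥ (Q *ᵥ v) := by
    rw [← Matrix.mulVec_mulVec, ← Matrix.mulVec_mulVec, ← dot_sym hSsym, ← hwdef,
      dot_eq hKtKA w w, ← hQv]
  have hQS : (Q * S)ᵀ * (Q * S) = C := by
    rw [Matrix.transpose_mul, hQsym, hSsym]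
    calc S * Q * (Q * S) = S * (Q ^ 2) * S := by
          rw [pow_two]; simp only [Matrix.mul_assoc]
      _ = C := by
          rw [hQsq]
          simp only [Matrix.mul_assoc]
          rw [Matrix.mul_nonsing_inv_cancel_left _ _ hSdet, hS2, Matrix.mul_one]
  rw [htarget, le_div_iff₀ hl2]
  constructor
  · rintro ⟨x, hx1, hx2⟩
    rw [hE₁, Set.mem_setOf_eq] at hx1
    rw [hE₂, Set.mem_setOf_eq] at hx2
    set z : Fin n → ℝ := S *ᵥ (x - b) with hzdef
    have hz1 : z ⬝ᵥ z ≤ 1 := by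
      rw [hzdef, ← dot_eq (show Sᵀ * S = B by rw [hSsym, hSS]) (x - b) (x - b)]
      exact hx1
    have hzw : z - w = S *ᵥ (x - c) := by
      have hvec : x - b - y = x - c := by rw [hy]; abel
      rw [hzdef, hwdef, ← Matrix.mulVec_sub, hvec]
    set p : Fin n → ℝ := Q *ᵥ (z - w) with hpdef
    have hp1 : p ⬝ᵥ p ≤ 1 := by
      rw [hpdef, hzw, Matrix.mulVec_mulVec, ← dot_eq hQS (x - c) (x - c)]
      exact hx2
    have ha1 : -1 ≤ v ⬝ᵥ p := by
      nlinarith [dot_cs v p, hvv, hp1, dot_self_nonneg p, sq_nonneg (v ⬝ᵥ p + 1)]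
    have hQvz : (Q *ᵥ v) ⬝ᵥ z = v ⬝ᵥ p + 1 + μ * ((Q *ᵥ v) ⬝ᵥ (Q *ᵥ v)) := by
      have e1 : (Q *ᵥ v) ⬝ᵥ z = (Q *ᵥ v) ⬝ᵥ (z - w) + (Q *ᵥ v) ⬝ᵥ w := by
        rw [← dotProduct_add, sub_add_cancel]
      have e2 : (Q *ᵥ v) ⬝ᵥ (z - w) = v ⬝ᵥ p := by rw [dot_sym hQsym, ← hpdef]
      have e3 : (Q *ᵥ v) ⬝ᵥ w = 1 + μ * ((Q *ᵥ v) ⬝ᵥ (Q *ᵥ v)) := by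
        rw [dot_sym hQsym, hQw, hHalt, Matrix.add_mulVec, Matrix.one_mulVec,
          Matrix.smul_mulVec, dotProduct_add, dotProduct_smul, hvv,
          dot_eq (show Qᵀ * Q = Q ^ 2 by rw [hQsym, pow_two]) v v]
        simp [smul_eq_mul]
      rw [e1, e2, e3]; ring
    have hkey : 0 ≤ (z - μ • (Q *ᵥ v)) ⬝ᵥ (z - μ • (Q *ᵥ v)) := dot_self_nonneg _
    have hexp : (z - μ • (Q *ᵥ v)) ⬝ᵥ (z - μ • (Q *ᵥ v))
        = z ⬝ᵥ z - 2 * μ * ((Q *ᵥ v) ⬝ᵥ z) + μ ^ 2 * ((Q *ᵥ v) ⬝ᵥ (Q *ᵥ v)) := by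
      have hc : z ⬝ᵥ (Q *ᵥ v) = (Q *ᵥ v) ⬝ᵥ z := dotProduct_comm _ _
      simp only [sub_dotProduct, dotProduct_sub, smul_dotProduct,
        dotProduct_smul, smul_eq_mul, hc]
      ring
    have h6 : μ ^ 2 * ((Q *ᵥ v) ⬝ᵥ (Q *ᵥ v)) ≤ 1 := by
      nlinarith [hkey, hexp, hQvz, hz1,
        mul_nonneg hμpos.le (show (0:ℝ) ≤ v ⬝ᵥ p + 1 by linarith)]
    calc ((Q *ᵥ v) ⬝ᵥ (Q *ᵥ v)) * l ^ 2 = μ ^ 2 * ((Q *ᵥ v) ⬝ᵥ (Q *ᵥ v)) := by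
          rw [hl2μ]; ring
      _ ≤ 1 := h6
  · intro hle
    refine ⟨b + S⁻¹ *ᵥ (μ • (Q *ᵥ v)), ?_, ?_⟩
    · rw [hE₁, Set.mem_setOf_eq]
      have hxb : b + S⁻¹ *ᵥ (μ • (Q *ᵥ v)) - b = S⁻¹ *ᵥ (μ • (Q *ᵥ v)) := by abel
      rw [hxb, dot_eq (show Sᵀ * S = B by rw [hSsym, hSS]), Matrix.mulVec_mulVec,
        hS1, Matrix.one_mulVec, dotProduct_smul, smul_dotProduct]
      simp only [smul_eq_mul]
      have heq : μ * (μ * ((Q *ᵥ v) ⬝ᵥ (Q *ᵥ v))) = ((Q *ᵥ v) ⬝ᵥ (Q *ᵥ v)) * l ^ 2 := by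
        rw [hl2μ]; ring
      rw [heq]
      exact hle
    · rw [hE₂, Set.mem_setOf_eq]
      have hSinvw : S⁻¹ *ᵥ w = y := by
        rw [hwdef, Matrix.mulVec_mulVec, hS2, Matrix.one_mulVec]
      have hxc : b + S⁻¹ *ᵥ (μ • (Q *ᵥ v)) - c = S⁻¹ *ᵥ (μ • (Q *ᵥ v) - w) := by
        rw [Matrix.mulVec_sub, hSinvw, hy]
        abel
      have hQdiff : Q *ᵥ (μ • (Q *ᵥ v) - w) = -v := by
        rw [Matrix.mulVec_sub, Matrix.mulVec_smul, Matrix.mulVec_mulVec, ← pow_two,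
          hQw, hHalt, Matrix.add_mulVec, Matrix.one_mulVec, Matrix.smul_mulVec]
        abel
      rw [hxc, dot_eq hQS, Matrix.mulVec_mulVec, Matrix.mul_assoc, hS1, Matrix.mul_one,
        hQdiff, dotProduct_neg, neg_dotProduct, neg_neg, hvv]
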